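/- arXiv:2502.20236 — 4 statements merged into one kernel-verified Lean document; each statement's English description precedes it below -/
import Mathlib

section
/- Let B be a complete set and let p ∈ S(B) be a locally isolated complete type. Then p ∈ S_*(B), i.e., p is weakly orthogonal to P: for any realization c̄ of p, P ∩ (B ∪ c̄) = P ∩ B and B ∪ c̄ is complete. -/
open FirstOrder FirstOrder.Language Cardinal

universe u

namespace OverPredicate

variable (L : FirstOrder.Language.{u, u}) (C : Type u) [L.Structure C] [L.IsRelational]
variable (P : L.Relations 1)

/-- The set of realizations of the distinguished predicate `P` in the monster model `C`. -/
def Pset : Set C := { x | Structure.RelMap P ![x] }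

/-- The induced `L`-structure on a subset of the monster model
(the language is relational, so every subset is a substructure). -/
def setStructure (A : Set C) : L.Structure A where
  funMap := fun f _ => isEmptyElim f
  RelMap := fun r x => Structure.RelMap r (fun i => (x i : C))

/-- Realization of a formula in the structure induced on a subset `A` of the monster. -/
def RealizeIn (A : Set C) {α : Type*} (φ : L.Formula α) (v : α → A) : Prop :=
  letI := setStructure L C A
  φ.Realize v

/-- Satisfaction of a sentence in the structure induced on a subset of the monster. -/
def SatIn (A : Set C) (σ : L.Sentence) : Prop :=
  RealizeIn L C A σ (fun e => isEmptyElim e)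

/-- `A ≡ B`: the substructures of `C` with universes `A` and `B` are elementarily
equivalent, i.e. `Th(C|_A) = Th(C|_B)`. -/
def ElemEquivSets (A B : Set C) : Prop := ∀ σ : L.Sentence, SatIn L C A σ ↔ SatIn L C B σ

/-- `A ≺ B` for subsets of the monster model. -/
def ElemSubset (A B : Set C) : Prop :=
  ∃ h : A ⊆ B, ∀ (m : ℕ) (φ : L.Formula (Fin m)) (x : Fin m → A),
    RealizeIn L C A φ x ↔ RealizeIn L C B φ (fun i => ⟨(x i : C), h (x i).2⟩)

/-- `M ≺ C`: the subset `M` is the universe of an elementary submodel of the monster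
model; in particular `M ⊨ T`. -/
def ElemInC (M : Set C) : Prop :=
  ∀ (m : ℕ) (φ : L.Formula (Fin m)) (x : Fin m → M),
    RealizeIn L C M φ x ↔ φ.Realize (fun i => (x i : C))

/-- Formulas with parameters in `A` and `n` free variables. -/
def FormulaOver (A : Set C) (n : ℕ) :=
  Σ m : ℕ, L.Formula (Fin n ⊕ Fin m) × (Fin m → A)

/-- The tuple `c` realizes (in the monster) the formula `χ` with parameters in `A`. -/
def Realizes (A : Set C) {n : ℕ} (c : Fin n → C) (χ : FormulaOver L C A n) : Prop :=
  χ.2.1.Realize (Sum.elim c (fun i => (χ.2.2 i : C)))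

/-- The complete type of the tuple `c` over the set `A`. -/
def typeOf (A : Set C) {n : ℕ} (c : Fin n → C) : Set (FormulaOver L C A n) :=
  { χ | Realizes L C A c χ }

/-- `c` realizes the partial type `p` over `A`. -/
def RealizesAll (A : Set C) {n : ℕ} (c : Fin n → C) (p : Set (FormulaOver L C A n)) : Prop :=
  ∀ χ ∈ p, Realizes L C A c χ

/-- A partial type over `A` is consistent iff it is realized in the monster model. -/
def Consistent (A : Set C) {n : ℕ} (p : Set (FormulaOver L C A n)) : Prop :=
  ∃ c : Fin n → C, RealizesAll L C A c p

/-- `A ⊆ C` is complete: whenever `C ⊨ (∃ x̄ ⊆ P) ψ(x̄, b̄)` with `b̄` from `A`, there is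
a witness `ā` from `P ∩ A`. -/
def IsComplete (A : Set C) : Prop :=
  ∀ (k m : ℕ) (ψ : L.Formula (Fin k ⊕ Fin m)) (b : Fin m → C), (∀ i, b i ∈ A) →
    (∃ x : Fin k → C, (∀ i, x i ∈ Pset L C P) ∧ ψ.Realize (Sum.elim x b)) →
    ∃ a : Fin k → C, (∀ i, a i ∈ Pset L C P ∩ A) ∧ ψ.Realize (Sum.elim a b)

/-- `S_*(A)`: complete types over `A` (in `n` variables) weakly orthogonal to `P`. -/
def SStar (A : Set C) (n : ℕ) : Set (Set (FormulaOver L C A n)) :=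
  { p | ∃ c : Fin n → C, p = typeOf L C A c ∧
      Pset L C P ∩ (A ∪ Set.range c) = Pset L C P ∩ A ∧
      IsComplete L C P (A ∪ Set.range c) }

/-- `A` is stable over `P`: for every `A'` elementarily equivalent to `A`,
`|S_*(A')| ≤ |A'| ^ |T|`. -/
def IsStableSet (A : Set C) : Prop :=
  ∀ B : Set C, ElemEquivSets L C A B →
    #(Σ n : ℕ, ↥(SStar L C P B n)) ≤ #↥B ^ (Language.card L + ℵ₀)

/-- `T` is fully stable over `P`: every complete set is stable over `P`. -/
def FullyStable : Prop := ∀ A : Set C, IsComplete L C P A → IsStableSet L C P A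

/-- `T` is fully stable over `N ⊨ T^P`: every complete set with `P`-part `N` is stable. -/
def FullyStableOverSet (N : Set C) : Prop :=
  ∀ A : Set C, IsComplete L C P A → Pset L C P ∩ A = N → IsStableSet L C P A

/-- `A` has the existence property over `P`. -/
def HasExistence (A : Set C) : Prop :=
  ∃ M : Set C, ElemInC L C M ∧ A ⊆ M ∧ Pset L C P ∩ M = Pset L C P ∩ A

/-- Hypothesis 1: (i) `P` is stably embedded; (ii) `0`-definable subsets of `P^C` are
`0`-definable in the induced structure `C^P`; (iii) `T` has quantifier elimination. -/
def Hypothesis1 : Prop :=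
  (∀ (k m : ℕ) (ψ : L.Formula (Fin k ⊕ Fin m)) (a : Fin k → C),
    ∃ (l : ℕ) (θ : L.Formula (Fin m ⊕ Fin l)) (c : Fin l → C),
      (∀ i, c i ∈ Pset L C P) ∧
      ∀ y : Fin m → C, (∀ i, y i ∈ Pset L C P) →
        (ψ.Realize (Sum.elim a y) ↔ θ.Realize (Sum.elim y c))) ∧
  (∀ (m : ℕ) (φ : L.Formula (Fin m)),
    (∀ x : Fin m → C, φ.Realize x → ∀ i, x i ∈ Pset L C P) →
    ∃ θ : L.Formula (Fin m),
      ∀ x : Fin m → ↥(Pset L C P),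
        (φ.Realize (fun i => (x i : C)) ↔ RealizeIn L C (Pset L C P) θ x)) ∧
  (∀ (m : ℕ) (φ : L.Formula (Fin m)), ∃ θ : L.Formula (Fin m),
    θ.IsQF ∧ ∀ x : Fin m → C, (φ.Realize x ↔ θ.Realize x))

/-- A system of uniform defining formulas `Ψ_ψ(ȳ, z̄)`, one for each `ψ(x̄, ȳ)`. -/
def UniformDefs :=
  ∀ (k m : ℕ), L.Formula (Fin k ⊕ Fin m) → Σ l : ℕ, L.Formula (Fin m ⊕ Fin l)

/-- `U` is a system of uniform definitions of `ψ`-types over `P`. -/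
def IsUniformDefs (U : UniformDefs L) : Prop :=
  ∀ (k m : ℕ) (ψ : L.Formula (Fin k ⊕ Fin m)) (a : Fin k → C),
    ∃ c : Fin (U k m ψ).1 → C, (∀ i, c i ∈ Pset L C P) ∧
      ∀ y : Fin m → C, (∀ i, y i ∈ Pset L C P) →
        (ψ.Realize (Sum.elim a y) ↔ (U k m ψ).2.Realize (Sum.elim y c))

/-- Semantic implication between partial types over `A`. -/
def ImpliesSet (A : Set C) {n : ℕ} (r p : Set (FormulaOver L C A n)) : Prop :=
  ∀ c : Fin n → C, RealizesAll L C A c r → RealizesAll L C A c p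

/-- The restriction `p ↾ φ` of a type to instances (or negated instances) of `φ`. -/
def restrictTo (A : Set C) {n : ℕ} (p : Set (FormulaOver L C A n)) (m : ℕ)
    (φ : L.Formula (Fin n ⊕ Fin m)) : Set (FormulaOver L C A n) :=
  { χ ∈ p | ∃ b : Fin m → A, χ = ⟨m, φ, b⟩ ∨ χ = ⟨m, φ.not, b⟩ }

/-- A type over `A` is locally isolated if each of its restrictions `p ↾ φ` is
implied by a single formula in `p`. -/
def LocallyIsolated (A : Set C) {n : ℕ} (p : Set (FormulaOver L C A n)) : Prop :=
  ∀ (m : ℕ) (φ : L.Formula (Fin n ⊕ Fin m)),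
    ∃ θ ∈ p, ImpliesSet L C A {θ} (restrictTo L C A p m φ)

/-- A type `p` is `λ`-isolated if it is implied by a subset of size `< λ`. -/
def LambdaIsolated (A : Set C) {n : ℕ} (lam : Cardinal.{u})
    (p : Set (FormulaOver L C A n)) : Prop :=
  ∃ r ⊆ p, #↥r < lam ∧ ImpliesSet L C A r p

/-- `D` is locally constructible over `B`. -/
def LocallyConstructible (B D : Set C) : Prop :=
  B ⊆ D ∧ ∃ (α : Ordinal.{u}) (d : Ordinal.{u} → C),
    D = B ∪ d '' Set.Iio α ∧
    ∀ i < α, LocallyIsolated L C (B ∪ d '' Set.Iio i)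
      (typeOf L C (B ∪ d '' Set.Iio i) (fun _ : Fin 1 => d i))

/-- Relativized universal quantification: `(∀ z̄ ⊆ P) θ(·, z̄)`. -/
noncomputable def pAlls {α : Type*} (l : ℕ) (θ : L.Formula (α ⊕ Fin l)) : L.Formula α :=
  Formula.iAlls (Fin l)
    ((List.finRange l).foldr
      (fun j acc => (Relations.formula P ![Term.var (Sum.inr j)]).imp acc) θ)

/-- Relativized existential quantification: `(∃ z̄ ⊆ P) θ(·, z̄)`. -/
noncomputable def pExs {α : Type*} (l : ℕ) (θ : L.Formula (α ⊕ Fin l)) : L.Formula α :=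
  Formula.iExs (Fin l)
    ((List.finRange l).foldr
      (fun j acc => (Relations.formula P ![Term.var (Sum.inr j)]) ⊓ acc) θ)

/-- Standardize a formula `ψ(x̄, ȳ, z̄)` to the shape `ψ(w̄, z̄)` used for uniform definitions. -/
def psiStd {n m l : ℕ} (ψ : L.Formula ((Fin n ⊕ Fin m) ⊕ Fin l)) :
    L.Formula (Fin (n + m) ⊕ Fin l) :=
  ψ.relabel (Sum.map (⇑finSumFinEquiv) id)

/-- The number of parameters of the uniform definition of `ψ`. -/
def defLen (U : UniformDefs L) {n m l : ℕ} (ψ : L.Formula ((Fin n ⊕ Fin m) ⊕ Fin l)) : ℕ :=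
  (U (n + m) l (psiStd L ψ)).1

/-- The uniform defining formula `Ψ_ψ(z̄, w̄)` for `ψ(x̄, ȳ, z̄)`. -/
def defFml (U : UniformDefs L) {n m l : ℕ} (ψ : L.Formula ((Fin n ⊕ Fin m) ⊕ Fin l)) :
    L.Formula (Fin l ⊕ Fin (defLen L U ψ)) :=
  (U (n + m) l (psiStd L ψ)).2

/-- Combine two parameter tuples into one. -/
def combParams {γ : Type*} {m l : ℕ} (b : Fin m → γ) (d : Fin l → γ) : Fin (m + l) → γ :=
  fun i => Sum.elim b d (finSumFinEquiv.symm i)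

/-- The formula `(∀ z̄ ⊆ P) [ψ(x̄, ȳ, z̄) ↔ Ψ_ψ(z̄, w̄)]`, with free variables `x̄` and
parameter slots `ȳ w̄`. -/
noncomputable def eqDefFormula (U : UniformDefs L) {n m l : ℕ}
    (ψ : L.Formula ((Fin n ⊕ Fin m) ⊕ Fin l)) :
    L.Formula (Fin n ⊕ Fin (m + defLen L U ψ)) :=
  pAlls L P l
    ((ψ.relabel (fun v => match v with
        | Sum.inl (Sum.inl i) => Sum.inl (Sum.inl i)
        | Sum.inl (Sum.inr j) => Sum.inl (Sum.inr (Fin.castAdd (defLen L U ψ) j))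
        | Sum.inr z => Sum.inr z)).iff
      ((defFml L U ψ).relabel (fun v => match v with
        | Sum.inl z => Sum.inr z
        | Sum.inr j => Sum.inl (Sum.inr (Fin.natAdd m j)))))

/-- The formula `[(∃ z̄ ⊆ P) ψ(x̄, ȳ, z̄)] → ψ(x̄, ȳ, z̄')`, with free variables `x̄` and
parameter slots `ȳ z̄'`. -/
noncomputable def exImpFormula {n m l : ℕ}
    (ψ : L.Formula ((Fin n ⊕ Fin m) ⊕ Fin l)) :
    L.Formula (Fin n ⊕ Fin (m + l)) :=
  (pExs L P l (ψ.relabel (fun v => match v with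
      | Sum.inl (Sum.inl i) => Sum.inl (Sum.inl i)
      | Sum.inl (Sum.inr j) => Sum.inl (Sum.inr (Fin.castAdd l j))
      | Sum.inr z => Sum.inr z))).imp
    (ψ.relabel (fun v => match v with
      | Sum.inl (Sum.inl i) => Sum.inl i
      | Sum.inl (Sum.inr j) => Sum.inr (Fin.castAdd l j)
      | Sum.inr z => Sum.inr (Fin.natAdd m z)))

/-- `r` is a `Δ`-type over `A`. -/
def IsDeltaType (A : Set C) {n : ℕ} (Δ : Set (Σ m : ℕ, L.Formula (Fin n ⊕ Fin m)))
    (r : Set (FormulaOver L C A n)) : Prop :=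
  ∀ χ ∈ r, ∃ ψ ∈ Δ, ∃ b : Fin ψ.1 → A,
    χ = ⟨ψ.1, ψ.2, b⟩ ∨ χ = ⟨ψ.1, ψ.2.not, b⟩

/-- `r` and `s` are explicitly contradictory. -/
def ExplicitlyContradictory (A : Set C) {n : ℕ}
    (r s : Set (FormulaOver L C A n)) : Prop :=
  ∃ (m : ℕ) (ψ : L.Formula (Fin n ⊕ Fin m)) (b : Fin m → A),
    (⟨m, ψ, b⟩ : FormulaOver L C A n) ∈ r ∧ (⟨m, ψ.not, b⟩ : FormulaOver L C A n) ∈ s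

/-- The rank `R^n_A(p, Δ₁, Δ₂, λ) ≥ β` (for finite `β`), relative to a fixed system `U`
of uniform defining formulas. -/
noncomputable def RankGE (U : UniformDefs L) (A : Set C) (n : ℕ)
    (Δ₁ : Set (Σ m : ℕ, L.Formula (Fin n ⊕ Fin m)))
    (Δ₂ : Set (Σ m : ℕ, Σ l : ℕ, L.Formula ((Fin n ⊕ Fin m) ⊕ Fin l)))
    (lam : Cardinal.{u}) : ℕ → Set (FormulaOver L C A n) → Prop
  | 0, p => Consistent L C A p
  | (β + 1), p =>
      if Even β then
        ∀ μ : Ordinal.{u}, μ.card < lam → ∀ q ⊆ p, q.Finite →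
          ∃ r : { i : Ordinal.{u} // i ≤ μ } → Set (FormulaOver L C A n),
            (∀ i, IsDeltaType L C A Δ₁ (r i)) ∧
            (∀ i j, i ≠ j → ExplicitlyContradictory L C A (r i) (r j)) ∧
            (∀ i, RankGE U A n Δ₁ Δ₂ lam β (q ∪ r i))
      else
        ∀ μ : Ordinal.{u}, μ.card < lam → ∀ q ⊆ p, q.Finite →
          ∀ ψ : { i : Ordinal.{u} // i ≤ μ } →
              (Σ m : ℕ, Σ l : ℕ, L.Formula ((Fin n ⊕ Fin m) ⊕ Fin l)),
            (∀ i, ψ i ∈ Δ₂) →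
            ∀ b : ∀ i, Fin (ψ i).1 → A,
              ∃ d : ∀ i, Fin (defLen L U (ψ i).2.2) → ↥(Pset L C P ∩ A),
                RankGE U A n Δ₁ Δ₂ lam β
                  (q ∪ Set.range fun i =>
                    (⟨(ψ i).1 + defLen L U (ψ i).2.2, eqDefFormula L P U (ψ i).2.2,
                      combParams (b i) (fun j => (⟨(d i j : C), (d i j).2.2⟩ : A))⟩ :
                      FormulaOver L C A n))

/-- The definable closure of `A` in the monster model. -/
def dclSet (A : Set C) : Set C :=
  { b | ∃ (k : ℕ) (φ : L.Formula (Fin 1 ⊕ Fin k)) (a : Fin k → A),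
      φ.Realize (Sum.elim (fun _ => b) (fun i => (a i : C))) ∧
      ∀ b' : C, φ.Realize (Sum.elim (fun _ => b') (fun i => (a i : C))) → b' = b }

/-- The algebraic closure of `A` in the monster model. -/
def aclSet (A : Set C) : Set C :=
  { b | ∃ (k : ℕ) (φ : L.Formula (Fin 1 ⊕ Fin k)) (a : Fin k → A),
      φ.Realize (Sum.elim (fun _ => b) (fun i => (a i : C))) ∧
      { b' : C | φ.Realize (Sum.elim (fun _ => b') (fun i => (a i : C))) }.Finite }

/-- `T^P` eliminates imaginaries: every subset of a power of `P^C` definable with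
parameters in the induced structure `C^P` has a code there. -/
def EliminatesImaginariesP : Prop :=
  ∀ (n : ℕ) (X : Set (Fin n → ↥(Pset L C P))),
    (∃ (k : ℕ) (ψ : L.Formula (Fin n ⊕ Fin k)) (b : Fin k → ↥(Pset L C P)),
        ∀ x, x ∈ X ↔ RealizeIn L C (Pset L C P) ψ (Sum.elim x b)) →
    ∃ (l : ℕ) (φ : L.Formula (Fin n ⊕ Fin l)) (c : Fin l → ↥(Pset L C P)),
      (∀ x, x ∈ X ↔ RealizeIn L C (Pset L C P) φ (Sum.elim x c)) ∧
      ∀ c' : Fin l → ↥(Pset L C P),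
        (∀ x, x ∈ X ↔ RealizeIn L C (Pset L C P) φ (Sum.elim x c')) → c' = c

/-- The subset `N` of the monster is `λ`-saturated (as an `L`-structure). -/
def IsSaturatedSet (N : Set C) (lam : Cardinal.{u}) : Prop :=
  ∀ p : Set (Σ k : ℕ, L.Formula (Fin 1 ⊕ Fin k) × (Fin k → N)),
    #↥p < lam →
    (∀ q ⊆ p, q.Finite →
       ∃ c : N, ∀ χ ∈ q, RealizeIn L C N χ.2.1 (Sum.elim (fun _ : Fin 1 => c) χ.2.2)) →
    ∃ c : N, ∀ χ ∈ p, RealizeIn L C N χ.2.1 (Sum.elim (fun _ : Fin 1 => c) χ.2.2)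

/-- `f` is a partial elementary map from `D` into the monster model. -/
def PartialElemMap (D : Set C) (f : D → C) : Prop :=
  ∀ (m : ℕ) (φ : L.Formula (Fin m)) (x : Fin m → D),
    φ.Realize (fun i => ((x i) : C)) ↔ φ.Realize (fun i => f (x i))



private lemma key_lemma (B : Set C) (hB : IsComplete L C P B)
    {n : ℕ} (p : Set (FormulaOver L C B n))
    (hdec : ∀ (m : ℕ) (φ : L.Formula (Fin n ⊕ Fin m)) (b : Fin m → B),
      (⟨m, φ, b⟩ : FormulaOver L C B n) ∈ p ∨ (⟨m, φ.not, b⟩ : FormulaOver L C B n) ∈ p)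
    (hiso : LocallyIsolated L C B p)
    (c : Fin n → C) (hc : RealizesAll L C B c p)
    (k m : ℕ) (ψ : L.Formula (Fin k ⊕ Fin m)) (b : Fin m → C)
    (hb : ∀ i, b i ∈ B ∪ Set.range c)
    (hex : ∃ x : Fin k → C, (∀ i, x i ∈ Pset L C P) ∧ ψ.Realize (Sum.elim x b)) :
    ∃ a : Fin k → C, (∀ i, a i ∈ Pset L C P ∩ B) ∧ ψ.Realize (Sum.elim a b) := by
  classical
  have hσex : ∀ i : Fin m, ∃ s : ↥B ⊕ Fin n, b i = Sum.elim (fun β : ↥B => (β : C)) c s := by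
    intro i
    rcases hb i with h | h
    · exact ⟨Sum.inl ⟨b i, h⟩, rfl⟩
    · obtain ⟨j, hj⟩ := h
      exact ⟨Sum.inr j, hj.symm⟩
  choose σ hσ using hσex
  by_cases hBne : B.Nonempty
  case pos =>
    obtain ⟨b0, hb0⟩ := hBne
    set τ : Fin k ⊕ Fin m → Fin n ⊕ Fin (k + m) :=
      Sum.elim (fun i => Sum.inr (finSumFinEquiv (Sum.inl i)))
        (fun i => Sum.elim (fun _ : ↥B => Sum.inr (finSumFinEquiv (Sum.inr i)))
          (fun j => Sum.inl j) (σ i)) with hτ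
    set φ : L.Formula (Fin n ⊕ Fin (k + m)) := ψ.relabel τ with hφ
    set fillB : Fin m → ↥B := fun i => Sum.elim id (fun _ => ⟨b0, hb0⟩) (σ i) with hfillB
    have M1 : ∀ (x : Fin k → C) (z : Fin n → C),
        φ.Realize (Sum.elim z (Sum.elim x (fun i => (fillB i : C)) ∘ finSumFinEquiv.symm)) ↔
          ψ.Realize (Sum.elim x (fun i => Sum.elim (fun β : ↥B => (β : C)) z (σ i))) := by
      intro x z
      rw [hφ, Formula.realize_relabel]
      apply Iff.of_eq
      congr 1
      funext s
      rcases s with i | i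
      · simp [hτ]
      · rcases hsi : σ i with β | j <;> simp [hτ, hsi, hfillB]
    have hbc : (fun i => Sum.elim (fun β : ↥B => (β : C)) c (σ i)) = b := by
      funext i; exact (hσ i).symm
    obtain ⟨θ, hθp, hθimp⟩ := hiso (k + m) φ
    obtain ⟨mθ, θf, aθ⟩ := θ
    set bpar : Fin (mθ + m) → C :=
      fun t => Sum.elim (fun i => (aθ i : C)) (fun i => (fillB i : C))
        (finSumFinEquiv.symm t) with hbpar
    have hbparB : ∀ i, bpar i ∈ B := by
      intro i
      rcases hsi : (finSumFinEquiv.symm i : Fin mθ ⊕ Fin m) with j | j <;>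
        simp only [hbpar, hsi, Sum.elim_inl, Sum.elim_inr] <;> exact Subtype.coe_prop _
    set g1 : Fin n ⊕ Fin mθ → (Fin k ⊕ Fin (mθ + m)) ⊕ Fin n :=
      Sum.elim (fun j => Sum.inr j)
        (fun i => Sum.inl (Sum.inr (finSumFinEquiv (Sum.inl i)))) with hg1
    set g2 : Fin n ⊕ Fin (k + m) → (Fin k ⊕ Fin (mθ + m)) ⊕ Fin n :=
      Sum.elim (fun j => Sum.inr j)
        (fun t => Sum.elim (fun i => Sum.inl (Sum.inl i))
          (fun i => Sum.inl (Sum.inr (finSumFinEquiv (Sum.inr i))))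
          (finSumFinEquiv.symm t)) with hg2
    set Ψ : L.Formula (Fin k ⊕ Fin (mθ + m)) :=
      ((θf.relabel g1) ⊓ (φ.relabel g2)).iExs (Fin n) with hΨ
    have M3 : ∀ (x : Fin k → C),
        Ψ.Realize (Sum.elim x bpar) ↔
          ∃ z : Fin n → C,
            θf.Realize (Sum.elim z (fun i => (aθ i : C))) ∧
            φ.Realize (Sum.elim z
              (Sum.elim x (fun i => (fillB i : C)) ∘ finSumFinEquiv.symm)) := by
      intro x
      rw [hΨ, Formula.realize_iExs]
      apply exists_congr; intro z
      rw [Formula.realize_inf, Formula.realize_relabel, Formula.realize_relabel]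
      apply and_congr <;> (apply Iff.of_eq; congr 1)
      · funext s
        rcases s with j | i
        · simp [hg1]
        · simp [hg1, hbpar]
      · funext s
        rcases s with j | i
        · simp [hg2]
        · rcases hsi : (finSumFinEquiv.symm i : Fin k ⊕ Fin m) with t | t <;>
            simp [hg2, hsi, hbpar]
    obtain ⟨x₀, hx₀P, hx₀r⟩ := hex
    have hcθ : θf.Realize (Sum.elim c (fun i => (aθ i : C))) := hc _ hθp
    have hΨx₀ : Ψ.Realize (Sum.elim x₀ bpar) := by
      rw [M3]
      exact ⟨c, hcθ, by rw [M1, hbc]; exact hx₀r⟩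
    obtain ⟨a, haP, hΨa⟩ := hB k (mθ + m) Ψ bpar hbparB ⟨x₀, hx₀P, hΨx₀⟩
    rw [M3] at hΨa
    obtain ⟨z, hzθ, hzφ⟩ := hΨa
    set ρ : Fin (k + m) → ↥B :=
      fun t => Sum.elim (fun i => (⟨a i, (haP i).2⟩ : ↥B)) fillB
        (finSumFinEquiv.symm t) with hρdef
    have hρ : (fun t => ((ρ t : ↥B) : C)) =
        Sum.elim a (fun i => (fillB i : C)) ∘ finSumFinEquiv.symm := by
      funext t
      rcases hst : (finSumFinEquiv.symm t : Fin k ⊕ Fin m) with i | i <;>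
        simp [hρdef, hst]
    rcases hdec (k + m) φ ρ with hmem | hmem
    · refine ⟨a, haP, ?_⟩
      have h1 : φ.Realize (Sum.elim c (fun t => ((ρ t : ↥B) : C))) := hc _ hmem
      rw [hρ, M1, hbc] at h1
      exact h1
    · exfalso
      have hz' : Realizes L C B z ⟨k + m, φ.not, ρ⟩ := by
        refine hθimp z ?_ _ ⟨hmem, ρ, Or.inr rfl⟩
        intro χ hχ
        replace hχ : χ = ⟨mθ, θf, aθ⟩ := hχ
        subst hχ
        exact hzθ
      have hz'' : (φ.not).Realize (Sum.elim z (fun t => ((ρ t : ↥B) : C))) := hz'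
      rw [Formula.realize_not, hρ] at hz''
      exact hz'' hzφ
  case neg =>
    rcases k with _ | k
    · obtain ⟨x, _, hxr⟩ := hex
      exact ⟨x, fun i => i.elim0, hxr⟩
    · exfalso
      have hσc : ∀ i : Fin m, ∃ j, σ i = Sum.inr j := by
        intro i
        rcases hsi : σ i with β | j
        · exact absurd ⟨(β : C), β.2⟩ hBne
        · exact ⟨j, rfl⟩
      choose ν hν using hσc
      have hbν : ∀ i, b i = c (ν i) := by
        intro i
        have h := hσ i
        rw [hν i] at h
        exact h
      set τ' : Fin (k + 1) ⊕ Fin m → (Fin (k + 1) ⊕ Fin 0) ⊕ Fin n :=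
        Sum.elim (fun i => Sum.inl (Sum.inl i)) (fun i => Sum.inr (ν i)) with hτ'
      obtain ⟨x₀, hx₀P, hx₀r⟩ := hex
      have hreal : ((ψ.relabel τ').iExs (Fin n)).Realize
          (Sum.elim x₀ (fun i : Fin 0 => i.elim0) : Fin (k + 1) ⊕ Fin 0 → C) := by
        rw [Formula.realize_iExs]
        refine ⟨c, ?_⟩
        rw [Formula.realize_relabel]
        change ψ.Realize (fun s => Sum.elim (Sum.elim x₀ (fun i : Fin 0 => i.elim0)) c (τ' s))
        have heq : (fun s => Sum.elim (Sum.elim x₀ (fun i : Fin 0 => i.elim0)) c (τ' s)) =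
            Sum.elim x₀ b := by
          funext s
          rcases s with i | i
          · simp [hτ']
          · simp [hτ', hbν i]
        rw [heq]
        exact hx₀r
      obtain ⟨a, haP, _⟩ := hB (k + 1) 0 ((ψ.relabel τ').iExs (Fin n)) (fun i : Fin 0 => i.elim0)
        (fun i => i.elim0) ⟨x₀, hx₀P, hreal⟩
      exact hBne ⟨a 0, (haP 0).2⟩

/-- Let `B` be complete and `p ∈ S(B)` a locally isolated complete type.
Then `p ∈ S_*(B)`: for any realization `c̄` of `p`, `P ∩ (B ∪ c̄) = P ∩ B` and `B ∪ c̄`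
is complete. -/
theorem locally_isolated_implies_star
    (h1 : Hypothesis1 L C P)
    (B : Set C) (hB : IsComplete L C P B)
    (n : ℕ) (p : Set (FormulaOver L C B n))
    (hp : ∃ c : Fin n → C, p = typeOf L C B c)
    (hiso : LocallyIsolated L C B p) :
    p ∈ SStar L C P B n ∧
    ∀ c : Fin n → C, RealizesAll L C B c p →
      (Pset L C P ∩ (B ∪ Set.range c) = Pset L C P ∩ B ∧
       IsComplete L C P (B ∪ Set.range c)) := by
  classical
  obtain ⟨c₀, hp0⟩ := hp
  have hdec : ∀ (m : ℕ) (φ : L.Formula (Fin n ⊕ Fin m)) (b : Fin m → B),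
      (⟨m, φ, b⟩ : FormulaOver L C B n) ∈ p ∨ (⟨m, φ.not, b⟩ : FormulaOver L C B n) ∈ p := by
    intro m φ b
    by_cases h : φ.Realize (Sum.elim c₀ (fun i => (b i : C)))
    · left; rw [hp0]; exact h
    · right; rw [hp0]
      show (φ.not).Realize (Sum.elim c₀ (fun i => (b i : C)))
      rw [Formula.realize_not]; exact h
  have main : ∀ c : Fin n → C, RealizesAll L C B c p →
      (Pset L C P ∩ (B ∪ Set.range c) = Pset L C P ∩ B ∧
       IsComplete L C P (B ∪ Set.range c)) := by
    intro c hcreal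
    have KL := key_lemma L C P B hB p hdec hiso c hcreal
    constructor
    · apply Set.Subset.antisymm
      · rintro x ⟨hxP, hxBc⟩
        rcases hxBc with hxB | ⟨j, rfl⟩
        · exact ⟨hxP, hxB⟩
        · obtain ⟨a, haP, har⟩ := KL 1 1
            (Term.equal (Term.var (Sum.inl 0)) (Term.var (Sum.inr 0))) (fun _ => c j)
            (fun _ => Or.inr ⟨j, rfl⟩)
            ⟨fun _ => c j, fun _ => hxP, by simp⟩
          rw [Formula.realize_equal] at har
          simp only [Term.realize_var, Sum.elim_inl, Sum.elim_inr] at har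
          exact ⟨hxP, har ▸ (haP 0).2⟩
      · exact Set.inter_subset_inter_right _ Set.subset_union_left
    · intro k m ψ b hb hex
      obtain ⟨a, haP, har⟩ := KL k m ψ b hb hex
      exact ⟨a, fun i => ⟨(haP i).1, Or.inl (haP i).2⟩, har⟩
  have h0 := main c₀ (by intro χ hχ; rw [hp0] at hχ; exact hχ)
  exact ⟨⟨c₀, hp0, h0.1, h0.2⟩, main⟩

end OverPredicate
end

section
/- Let the uniform defining formulas Ψ_ψ(ȳ,z̄) be fixed as in the uniform definability observation. Then for any complete set A and any tuple ā from A, the ψ-type tp_ψ(ā/P ∩ A) is definable by Ψ_ψ(ȳ,c̄) for some tuple c̄ from A ∩ P; that is, there is c̄ ⊆ A ∩ P such that for all ȳ in P^C, C ⊨ ψ(ā,ȳ) if and only if C ⊨ Ψ_ψ(ȳ,c̄). -/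
open FirstOrder FirstOrder.Language Cardinal

universe u

namespace OverPredicate

variable (L : FirstOrder.Language.{u, u}) (C : Type u) [L.Structure C] [L.IsRelational]
variable (P : L.Relations 1)

lemma realize_foldr_imp {α : Type*} {l : ℕ} (θ : L.Formula (α ⊕ Fin l))
    (lst : List (Fin l)) (w : α ⊕ Fin l → C) :
    ((lst.foldr
      (fun j acc => (Relations.formula P ![Term.var (Sum.inr j)]).imp acc) θ).Realize w) ↔
    ((∀ j ∈ lst, w (Sum.inr j) ∈ Pset L C P) → θ.Realize w) := by
  induction lst with
  | nil => simp
  | cons hd tl ih =>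
    rw [List.foldr_cons]
    have heq : (fun i => Term.realize w
          ((![Term.var (Sum.inr hd)] : Fin 1 → L.Term (α ⊕ Fin l)) i)) =
        ![w (Sum.inr hd)] := by
      funext i; fin_cases i; simp
    have hrel : (Relations.formula P ![Term.var (Sum.inr hd)]).Realize w ↔
        w (Sum.inr hd) ∈ Pset L C P := by
      rw [Formula.realize_rel, heq]; rfl
    refine Iff.trans Formula.realize_imp ?_
    rw [hrel, ih]
    simp only [List.mem_cons]
    constructor
    · intro h hmem
      exact h (hmem hd (Or.inl rfl)) (fun j hj => hmem j (Or.inr hj))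
    · intro h h1 h2
      exact h (fun j hj => hj.elim (fun e => e ▸ h1) (h2 j))

lemma realize_pAlls {α : Type*} {l : ℕ} (θ : L.Formula (α ⊕ Fin l)) (v : α → C) :
    (pAlls L P l θ).Realize v ↔
      ∀ z : Fin l → C, (∀ i, z i ∈ Pset L C P) → θ.Realize (Sum.elim v z) := by
  unfold pAlls
  rw [Formula.realize_iAlls]
  constructor
  · intro h z hz
    have := h z
    rw [realize_foldr_imp] at this
    exact this (fun j _ => hz j)
  · intro h z
    rw [realize_foldr_imp]
    intro hz
    exact h z (fun i => hz i (List.mem_finRange i))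

/-- Fix uniform defining formulas `Ψ_ψ` as in the uniform definability
observation.  For any complete set `A` and any tuple `ā` from `A`, the `ψ`-type
`tp_ψ(ā / P ∩ A)` is definable by `Ψ_ψ(ȳ,c̄)` for some `c̄ ⊆ A ∩ P`: for all `ȳ` in
`P^C`, `C ⊨ ψ(ā,ȳ) ↔ Ψ_ψ(ȳ,c̄)`. -/
theorem types_over_P_definable_over_P_part
    (h1 : Hypothesis1 L C P)
    (U : UniformDefs L) (hU : IsUniformDefs L C P U)
    (A : Set C) (hA : IsComplete L C P A)
    (k m : ℕ) (ψ : L.Formula (Fin k ⊕ Fin m))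
    (a : Fin k → C) (ha : ∀ i, a i ∈ A) :
    ∃ c : Fin (U k m ψ).1 → C, (∀ i, c i ∈ Pset L C P ∩ A) ∧
      ∀ y : Fin m → C, (∀ i, y i ∈ Pset L C P) →
        (ψ.Realize (Sum.elim a y) ↔ (U k m ψ).2.Realize (Sum.elim y c)) := by
  classical
  set l := (U k m ψ).1 with hl
  set Ψ := (U k m ψ).2 with hΨ
  let χ : L.Formula (Fin l ⊕ Fin k) :=
    pAlls L P m
      ((ψ.relabel (Sum.map Sum.inr id : Fin k ⊕ Fin m → (Fin l ⊕ Fin k) ⊕ Fin m)).iff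
        (Ψ.relabel (Sum.elim (Sum.inr : Fin m → (Fin l ⊕ Fin k) ⊕ Fin m)
          (fun i => Sum.inl (Sum.inl i)))))
  have key : ∀ x : Fin l → C, χ.Realize (Sum.elim x a) ↔
      ∀ y : Fin m → C, (∀ i, y i ∈ Pset L C P) →
        (ψ.Realize (Sum.elim a y) ↔ Ψ.Realize (Sum.elim y x)) := by
    intro x
    rw [show χ.Realize (Sum.elim x a) ↔ _ from realize_pAlls L C P _ _]
    refine forall_congr' fun y => imp_congr_right fun hy => ?_
    rw [Formula.realize_iff, Formula.realize_relabel, Formula.realize_relabel]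
    have e1 : (Sum.elim (Sum.elim x a) y) ∘
        (Sum.map Sum.inr id : Fin k ⊕ Fin m → (Fin l ⊕ Fin k) ⊕ Fin m) = Sum.elim a y := by
      funext i; cases i <;> rfl
    have e2 : (Sum.elim (Sum.elim x a) y) ∘
        (Sum.elim (Sum.inr : Fin m → (Fin l ⊕ Fin k) ⊕ Fin m)
          (fun i => Sum.inl (Sum.inl i))) = Sum.elim y x := by
      funext i; cases i <;> rfl
    rw [e1, e2]
  obtain ⟨c₀, hc₀, hdef⟩ := hU k m ψ a
  have hex : ∃ x : Fin l → C, (∀ i, x i ∈ Pset L C P) ∧ χ.Realize (Sum.elim x a) :=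
    ⟨c₀, hc₀, (key c₀).mpr (fun y hy => hdef y hy)⟩
  obtain ⟨c, hc, hχ⟩ := hA l k χ a ha hex
  exact ⟨c, hc, fun y hy => (key c).mp hχ y hy⟩


end OverPredicate
end

section
/- Assume that T^P eliminates imaginaries. Then every subset of P^C that is definable in C (with arbitrary parameters from C) has a code in P^C: a tuple c ⊆ P^C such that for every automorphism σ of C, σ fixes the set setwise if and only if σ fixes c pointwise. -/
open FirstOrder FirstOrder.Language Cardinal

universe u

namespace OverPredicate

variable (L : FirstOrder.Language.{u, u}) (C : Type u) [L.Structure C] [L.IsRelational]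
variable (P : L.Relations 1)

set_option linter.unusedSectionVars false in
theorem sigma_mem_Pset (σ : C ≃[L] C) {x : C} : σ x ∈ Pset L C P ↔ x ∈ Pset L C P := by
  have h := σ.map_rel P ![x]
  have e : σ ∘ ![x] = ![σ x] := by
    funext i; simp [Matrix.cons_val_fin_one, Function.comp]
  rw [e] at h
  exact h

noncomputable def restrictAut (σ : C ≃[L] C) :
    @FirstOrder.Language.Equiv L ↥(Pset L C P) ↥(Pset L C P)
      (setStructure L C (Pset L C P)) (setStructure L C (Pset L C P)) :=
  letI := setStructure L C (Pset L C P)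
  { toFun := fun x => ⟨σ x, (sigma_mem_Pset L C P σ).2 x.2⟩
    invFun := fun x => ⟨σ.symm x, (sigma_mem_Pset L C P σ).1
      (by rw [σ.apply_symm_apply]; exact x.2)⟩
    left_inv := fun x => Subtype.ext (σ.symm_apply_apply x)
    right_inv := fun x => Subtype.ext (σ.apply_symm_apply x)
    map_fun' := fun f _ => isEmptyElim f
    map_rel' := fun r x => σ.map_rel r (fun i => (x i : C)) }

theorem realizeIn_comp (σ : C ≃[L] C) {α : Type*} (φ : L.Formula α) (v : α → ↥(Pset L C P)) :
    RealizeIn L C (Pset L C P) φ (fun i => restrictAut L C P σ (v i)) ↔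
      RealizeIn L C (Pset L C P) φ v := by
  letI := setStructure L C (Pset L C P)
  exact StrongHomClass.realize_formula (restrictAut L C P σ) φ

noncomputable def allP (m : ℕ) : L.Formula (Fin m) :=
  (List.finRange m).foldr (fun i acc => (Relations.formula P ![Term.var i]) ⊓ acc) ⊤

set_option linter.unusedSectionVars false in
theorem realize_allP_foldr {m : ℕ} (li : List (Fin m)) (v : Fin m → C) :
    ((li.foldr (fun i acc => (Relations.formula P ![Term.var i]) ⊓ acc)
      (⊤ : L.Formula (Fin m))).Realize v) ↔ ∀ i ∈ li, v i ∈ Pset L C P := by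
  induction li with
  | nil => simp
  | cons a l ih =>
    simp only [List.foldr_cons, Formula.realize_inf, ih, List.mem_cons]
    constructor
    · rintro ⟨h1, h2⟩ i (rfl | hi)
      · have := Formula.realize_rel.1 h1
        have e : (fun j : Fin 1 => Term.realize v ((![Term.var i] : Fin 1 → L.Term (Fin m)) j)) = ![v i] := by
          funext j; simp [Matrix.cons_val_fin_one]
        rw [e] at this
        exact this
      · exact h2 i hi
    · intro h
      refine ⟨Formula.realize_rel.2 ?_, fun i hi => h i (Or.inr hi)⟩
      have e : (fun j : Fin 1 => Term.realize v ((![Term.var a] : Fin 1 → L.Term (Fin m)) j)) = ![v a] := by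
        funext j; simp [Matrix.cons_val_fin_one]
      rw [e]
      exact h a (Or.inl rfl)

set_option linter.unusedSectionVars false in
theorem realize_allP {m : ℕ} (v : Fin m → C) :
    (allP L P m).Realize v ↔ ∀ i, v i ∈ Pset L C P := by
  rw [allP, realize_allP_foldr]
  simp [List.mem_finRange]

set_option maxHeartbeats 1000000 in
/-- If `T^P` eliminates imaginaries, then every subset of a power of
`P^C` definable in `C` (with arbitrary parameters from `C`) has a code in `P^C`: a tuple
`c̄ ⊆ P^C` such that every automorphism of `C` fixes the set setwise iff it fixes `c̄`
pointwise. -/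
theorem definable_subsets_of_P_have_codes_in_P
    (h1 : Hypothesis1 L C P)
    (hEI : EliminatesImaginariesP L C P)
    (n : ℕ) (X : Set (Fin n → C))
    (hXP : ∀ x ∈ X, ∀ i, x i ∈ Pset L C P)
    (hXdef : ∃ (k : ℕ) (φ : L.Formula (Fin n ⊕ Fin k)) (a : Fin k → C),
      ∀ x : Fin n → C, x ∈ X ↔ φ.Realize (Sum.elim x a)) :
    ∃ (l : ℕ) (c : Fin l → C), (∀ i, c i ∈ Pset L C P) ∧
      ∀ σ : C ≃[L] C,
        ((∀ x : Fin n → C, x ∈ X ↔ (fun i => σ (x i)) ∈ X) ↔ ∀ i, σ (c i) = c i) := by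
  classical
  obtain ⟨hSE, hInd, -⟩ := h1
  obtain ⟨k, φ, a, hφ⟩ := hXdef
  obtain ⟨l, θ, c, hcP, hθ⟩ := hSE k n (φ.relabel (Sum.elim Sum.inr Sum.inl)) a
  have hθ' : ∀ y : Fin n → C, (∀ i, y i ∈ Pset L C P) →
      (y ∈ X ↔ θ.Realize (Sum.elim y c)) := by
    intro y hy
    have e : (Sum.elim a y) ∘ (Sum.elim Sum.inr Sum.inl : Fin n ⊕ Fin k → Fin k ⊕ Fin n)
        = Sum.elim y a := by funext z; cases z <;> rfl
    rw [hφ y, ← hθ y hy, Formula.realize_relabel, e]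
  let c' : Fin l → ↥(Pset L C P) := fun i => ⟨c i, hcP i⟩
  let χ : L.Formula (Fin (n + l)) :=
    (θ.relabel ⇑finSumFinEquiv) ⊓ allP L P (n + l)
  have hχP : ∀ x : Fin (n + l) → C, χ.Realize x → ∀ i, x i ∈ Pset L C P := by
    intro x hx
    exact (realize_allP L C P x).1 (Formula.realize_inf.1 hx).2
  obtain ⟨θ₂, hθ₂⟩ := hInd (n + l) χ hχP
  let X' : Set (Fin n → ↥(Pset L C P)) := { x | (fun i => (x i : C)) ∈ X }
  let ψEI : L.Formula (Fin n ⊕ Fin l) := θ₂.relabel ⇑finSumFinEquiv.symm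
  have key : ∀ x : Fin n → ↥(Pset L C P),
      x ∈ X' ↔ RealizeIn L C (Pset L C P) ψEI (Sum.elim x c') := by
    intro x
    letI := setStructure L C (Pset L C P)
    have h1' : RealizeIn L C (Pset L C P) ψEI (Sum.elim x c') ↔
        RealizeIn L C (Pset L C P) θ₂ ((Sum.elim x c') ∘ ⇑finSumFinEquiv.symm) :=
      Formula.realize_relabel
    have h2' := hθ₂ ((Sum.elim x c') ∘ ⇑finSumFinEquiv.symm)
    have hu : ∀ i, (Sum.elim x c' (finSumFinEquiv.symm i)).1 ∈ Pset L C P :=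
      fun i => (Sum.elim x c' (finSumFinEquiv.symm i)).2
    have e2 : (fun i => (Sum.elim x c' (finSumFinEquiv.symm i)).1) ∘ ⇑finSumFinEquiv
        = Sum.elim (fun i => (x i : C)) c := by
      funext z
      cases z with
      | inl i => simp [Function.comp]
      | inr j => simp [Function.comp, c']
    have echi : χ.Realize (fun i => (Sum.elim x c' (finSumFinEquiv.symm i)).1) ↔
        θ.Realize (Sum.elim (fun i => (x i : C)) c) := by
      rw [Formula.realize_inf, Formula.realize_relabel, e2]
      simp [realize_allP L C P, hu]
    rw [h1', ← h2']
    show (fun i => (x i : C)) ∈ X ↔ _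
    rw [show (fun i => ((((Sum.elim x c') ∘ ⇑finSumFinEquiv.symm) i : ↥(Pset L C P)) : C))
        = (fun i => (Sum.elim x c' (finSumFinEquiv.symm i)).1) from rfl, echi]
    exact hθ' _ (fun i => (x i).2)
  obtain ⟨l₂, φ₀, c₀, hc₀, huniq⟩ := hEI n X' ⟨l, ψEI, c', key⟩
  refine ⟨l₂, fun i => (c₀ i : C), fun i => (c₀ i).2, ?_⟩
  intro σ
  constructor
  · intro hσ
    have hτ : ∀ x : Fin n → ↥(Pset L C P), x ∈ X' ↔
        RealizeIn L C (Pset L C P) φ₀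
          (Sum.elim x (fun i => restrictAut L C P σ.symm (c₀ i))) := by
      intro x
      have s1 : x ∈ X' ↔ (fun i => restrictAut L C P σ (x i)) ∈ X' := by
        show (fun i => (x i : C)) ∈ X ↔ _
        rw [hσ (fun i => (x i : C))]
        exact Iff.rfl
      rw [s1, hc₀]
      have hcomp := realizeIn_comp L C P σ.symm φ₀
        (Sum.elim (fun i => restrictAut L C P σ (x i)) c₀)
      rw [← hcomp]
      have e3 : (fun z => restrictAut L C P σ.symm
            ((Sum.elim (fun i => restrictAut L C P σ (x i)) c₀) z))
          = Sum.elim x (fun i => restrictAut L C P σ.symm (c₀ i)) := by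
        funext z
        cases z with
        | inl i =>
          show restrictAut L C P σ.symm (restrictAut L C P σ (x i)) = x i
          exact Subtype.ext (σ.symm_apply_apply _)
        | inr j => rfl
      rw [e3]
    have hun := huniq (fun i => restrictAut L C P σ.symm (c₀ i)) (fun x => hτ x)
    intro i
    have h5 : σ.symm ((c₀ i : C)) = (c₀ i : C) := congrArg Subtype.val (congrFun hun i)
    calc σ ((c₀ i : C)) = σ (σ.symm (c₀ i : C)) := by rw [h5]
      _ = (c₀ i : C) := σ.apply_symm_apply _
  · intro hfix x
    by_cases hx : ∀ i, x i ∈ Pset L C P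
    · have hfix' : ∀ i, restrictAut L C P σ (c₀ i) = c₀ i := fun i => Subtype.ext (hfix i)
      let x' : Fin n → ↥(Pset L C P) := fun i => ⟨x i, hx i⟩
      have m1 : x ∈ X ↔ x' ∈ X' := Iff.rfl
      have m2 : (fun i => σ (x i)) ∈ X ↔ (fun i => restrictAut L C P σ (x' i)) ∈ X' := Iff.rfl
      rw [m1, m2, hc₀, hc₀]
      have e4 : (Sum.elim (fun i => restrictAut L C P σ (x' i)) c₀)
          = fun z => restrictAut L C P σ ((Sum.elim x' c₀) z) := by
        funext z
        cases z with
        | inl i => rfl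
        | inr j => exact (hfix' j).symm
      rw [e4]
      exact (realizeIn_comp L C P σ φ₀ (Sum.elim x' c₀)).symm
    · push_neg at hx
      obtain ⟨i, hi⟩ := hx
      constructor
      · intro h; exact absurd (hXP x h i) hi
      · intro h
        exact absurd ((sigma_mem_Pset L C P σ).1 (hXP _ h i)) hi

end OverPredicate
end

section
/- Assume that T^P eliminates imaginaries. Then the following are equivalent for a set A ⊆ C: (i) A is complete; (ii) P^A ≺ P^C and dcl(A) ∩ P^C = P^A; (iii) P^A ≺ P^C and acl(A) ∩ P^C = P^A. (The implication (i) ⇒ (iii) holds without elimination of imaginaries.) -/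
open FirstOrder FirstOrder.Language Cardinal

universe u

namespace OverPredicate

variable (L : FirstOrder.Language.{u, u}) (C : Type u) [L.Structure C] [L.IsRelational]
variable (P : L.Relations 1)

section Aux

variable {L} {C} {P}

variable {α β : Type*}

lemma mem_Pset {x : C} : x ∈ Pset L C P ↔ Structure.RelMap P ![x] := Iff.rfl

/-- Bounded-formula realization in the induced structure on a subset. -/
def BRealizeIn (A : Set C) {α : Type*} {n : ℕ} (φ : L.BoundedFormula α n)
    (v : α → A) (xs : Fin n → A) : Prop :=
  @BoundedFormula.Realize L A (setStructure L C A) α n φ v xs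

lemma RealizeIn_def (A : Set C) {α : Type*} (φ : L.Formula α) (v : α → A) :
    RealizeIn L C A φ v ↔ BRealizeIn A φ v default := Iff.rfl

lemma term_realize_coe (A : Set C) {β : Type*} (t : L.Term β) (v : β → A) :
    ((@Term.realize L A (setStructure L C A) β v t : A) : C)
      = t.realize (fun i => (v i : C)) := by
  cases t with
  | var => rfl
  | func f _ => exact isEmptyElim f

/-- Finite conjunctions. -/
def conjF : ∀ {n : ℕ}, (Fin n → L.Formula α) → L.Formula α
  | 0, _ => ⊤
  | _ + 1, f => conjF (fun i => f i.castSucc) ⊓ f (Fin.last _)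

lemma realize_conjF {M : Type u} [L.Structure M] :
    ∀ {n : ℕ} (f : Fin n → L.Formula α) (v : α → M),
      (conjF f).Realize v ↔ ∀ i, (f i).Realize v := by
  intro n
  induction n with
  | zero => intro f v; simp [conjF]
  | succ n ih =>
    intro f v
    rw [conjF, Formula.realize_inf, ih]
    constructor
    · rintro ⟨h1, h2⟩ i
      refine Fin.lastCases h2 (fun j => h1 j) i
    · intro h
      exact ⟨fun j => h _, h _⟩

/-- Finite disjunctions. -/
def disjF : ∀ {n : ℕ}, (Fin n → L.Formula α) → L.Formula α
  | 0, _ => ⊥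
  | _ + 1, f => disjF (fun i => f i.castSucc) ⊔ f (Fin.last _)

lemma realize_disjF {M : Type u} [L.Structure M] :
    ∀ {n : ℕ} (f : Fin n → L.Formula α) (v : α → M),
      (disjF f).Realize v ↔ ∃ i, (f i).Realize v := by
  intro n
  induction n with
  | zero => intro f v; simp [disjF, Formula.Realize]
  | succ n ih =>
    intro f v
    rw [disjF, Formula.realize_sup, ih]
    constructor
    · rintro (⟨i, h⟩ | h)
      · exact ⟨_, h⟩
      · exact ⟨_, h⟩
    · rintro ⟨i, h⟩
      refine Fin.lastCases (fun h => Or.inr h) (fun j h => Or.inl ⟨j, h⟩) i h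

/-- The guard formula `P(&n)`. -/
def guardBF (P : L.Relations 1) {α : Type*} {n : ℕ} : L.BoundedFormula α (n + 1) :=
  P.boundedFormula₁ (Term.var (Sum.inr (Fin.last n)))

lemma realize_guardBF {M : Type u} [L.Structure M] {n : ℕ} {v : α → M}
    {xs : Fin (n + 1) → M} :
    (guardBF P (α := α) (n := n)).Realize v xs ↔ xs (Fin.last n) ∈ Pset L M P := by
  rw [guardBF, BoundedFormula.realize_rel₁]
  rfl

/-- Existential quantification of all bound variables, relativized to `P`. -/
def pExsBF (P : L.Relations 1) : ∀ {n : ℕ}, L.BoundedFormula α n → L.Formula α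
  | 0, φ => φ
  | _ + 1, φ => pExsBF P ((guardBF P ⊓ φ).ex)

/-- Universal quantification of all bound variables, relativized to `P`. -/
def pAllsBF (P : L.Relations 1) : ∀ {n : ℕ}, L.BoundedFormula α n → L.Formula α
  | 0, φ => φ
  | _ + 1, φ => pAllsBF P ((guardBF P ⟹ φ).all)

lemma realize_pExsBF {M : Type u} [L.Structure M] :
    ∀ {n : ℕ} (φ : L.BoundedFormula α n) (v : α → M),
      (pExsBF P φ).Realize v ↔
        ∃ xs : Fin n → M, (∀ i, xs i ∈ Pset L M P) ∧ φ.Realize v xs := by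
  intro n
  induction n with
  | zero =>
    intro φ v
    rw [pExsBF]
    constructor
    · intro h
      exact ⟨default, fun i => i.elim0, h⟩
    · rintro ⟨xs, -, h⟩
      exact (by rwa [Subsingleton.elim default xs] : φ.Realize v default)
  | succ n ih =>
    intro φ v
    rw [pExsBF, ih]
    constructor
    · rintro ⟨xs, hxs, hex⟩
      rw [BoundedFormula.realize_ex] at hex
      obtain ⟨a, ha⟩ := hex
      rw [BoundedFormula.realize_inf, realize_guardBF] at ha
      refine ⟨Fin.snoc xs a, ?_, ha.2⟩
      intro i
      refine Fin.lastCases ?_ (fun j => ?_) i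
      · rw [Fin.snoc_last]; simpa [Fin.snoc_last] using ha.1
      · rw [Fin.snoc_castSucc]; exact hxs j
    · rintro ⟨ys, hys, hφ⟩
      refine ⟨Fin.init ys, fun i => ?_, ?_⟩
      · exact hys _
      · rw [BoundedFormula.realize_ex]
        refine ⟨ys (Fin.last n), ?_⟩
        rw [BoundedFormula.realize_inf, realize_guardBF]
        refine ⟨?_, ?_⟩
        · rw [Fin.snoc_last]; exact hys _
        · rwa [Fin.snoc_init_self]

lemma realize_pAllsBF {M : Type u} [L.Structure M] :
    ∀ {n : ℕ} (φ : L.BoundedFormula α n) (v : α → M),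
      (pAllsBF P φ).Realize v ↔
        ∀ xs : Fin n → M, (∀ i, xs i ∈ Pset L M P) → φ.Realize v xs := by
  intro n
  induction n with
  | zero =>
    intro φ v
    rw [pAllsBF]
    constructor
    · intro h xs _
      rwa [Subsingleton.elim xs default]
    · intro h
      exact h default fun i => i.elim0
  | succ n ih =>
    intro φ v
    rw [pAllsBF, ih]
    constructor
    · intro h ys hys
      have := h (Fin.init ys) (fun i => hys _)
      rw [BoundedFormula.realize_all] at this
      have h2 := this (ys (Fin.last n))
      rw [BoundedFormula.realize_imp, realize_guardBF] at h2
      rw [← Fin.snoc_init_self ys]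
      apply h2
      rw [Fin.snoc_last]
      exact hys _
    · intro h xs hxs
      rw [BoundedFormula.realize_all]
      intro a
      rw [BoundedFormula.realize_imp, realize_guardBF, Fin.snoc_last]
      intro ha
      apply h
      intro i
      refine Fin.lastCases ?_ (fun j => ?_) i
      · rwa [Fin.snoc_last]
      · rw [Fin.snoc_castSucc]; exact hxs j

/-- Turning a formula with sum-indexed free variables into a bounded formula. -/
def toBF {k : ℕ} (φ : L.Formula (Fin k ⊕ β)) : L.BoundedFormula β k :=
  BoundedFormula.relabel Sum.swap φ

lemma realize_toBF {M : Type u} [L.Structure M] {k : ℕ} (φ : L.Formula (Fin k ⊕ β))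
    (v : β → M) (xs : Fin k → M) :
    (toBF φ).Realize v xs ↔ φ.Realize (Sum.elim xs v) := by
  rw [toBF, BoundedFormula.realize_relabel]
  have h1 : (Sum.elim v (xs ∘ Fin.castAdd 0)) ∘ Sum.swap = Sum.elim xs v := by
    funext x; cases x <;> rfl
  rw [h1]
  exact iff_of_eq
    (congrArg (BoundedFormula.Realize φ (Sum.elim xs v)) (Subsingleton.elim _ _))

/-- `(∃ x̄ ⊆ P) φ(x̄, ·)`. -/
def pExF (P : L.Relations 1) {k : ℕ} (φ : L.Formula (Fin k ⊕ β)) : L.Formula β :=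
  pExsBF P (toBF φ)

/-- `(∀ x̄ ⊆ P) φ(x̄, ·)`. -/
def pAllF (P : L.Relations 1) {k : ℕ} (φ : L.Formula (Fin k ⊕ β)) : L.Formula β :=
  pAllsBF P (toBF φ)

/-- `∃ x̄ φ(x̄, ·)` (unrelativized). -/
def exF {k : ℕ} (φ : L.Formula (Fin k ⊕ β)) : L.Formula β :=
  (toBF φ).exs

lemma realize_pExF {M : Type u} [L.Structure M] {k : ℕ} (φ : L.Formula (Fin k ⊕ β))
    (v : β → M) :
    (pExF P φ).Realize v ↔
      ∃ x : Fin k → M, (∀ i, x i ∈ Pset L M P) ∧ φ.Realize (Sum.elim x v) := by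
  rw [pExF, realize_pExsBF]
  exact exists_congr fun x => and_congr_right fun _ => realize_toBF φ v x

lemma realize_pAllF {M : Type u} [L.Structure M] {k : ℕ} (φ : L.Formula (Fin k ⊕ β))
    (v : β → M) :
    (pAllF P φ).Realize v ↔
      ∀ x : Fin k → M, (∀ i, x i ∈ Pset L M P) → φ.Realize (Sum.elim x v) := by
  rw [pAllF, realize_pAllsBF]
  exact forall_congr' fun x => imp_congr_right fun _ => realize_toBF φ v x

lemma realize_exF {M : Type u} [L.Structure M] {k : ℕ} (φ : L.Formula (Fin k ⊕ β))
    (v : β → M) :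
    (exF φ).Realize v ↔ ∃ x : Fin k → M, φ.Realize (Sum.elim x v) := by
  rw [exF, BoundedFormula.realize_exs]
  exact exists_congr fun x => realize_toBF φ v x

end Aux


section Aux2

variable {L} {C} {P}

variable {α : Type*}

/-- Relativization of quantifiers to `P`. -/
def relQ (P : L.Relations 1) : ∀ {n : ℕ}, L.BoundedFormula α n → L.BoundedFormula α n
  | _, BoundedFormula.falsum => BoundedFormula.falsum
  | _, BoundedFormula.equal t u => BoundedFormula.equal t u
  | _, BoundedFormula.rel R ts => BoundedFormula.rel R ts
  | _, BoundedFormula.imp f g => BoundedFormula.imp (relQ P f) (relQ P g)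
  | _, BoundedFormula.all f => (guardBF P ⟹ relQ P f).all

lemma coe_elim_eq {A : Set C} (v : α → A) {n : ℕ} (xs : Fin n → A) :
    (fun i => ((Sum.elim v xs i : A) : C))
      = Sum.elim (fun i => ((v i : A) : C)) (fun i => ((xs i : A) : C)) := by
  funext x; cases x <;> rfl

lemma coe_snoc_eq {A : Set C} {n : ℕ} (xs : Fin n → A) (a : A) :
    (fun i : Fin (n + 1) => (((Fin.snoc xs a : Fin (n + 1) → A) i : A) : C))
      = Fin.snoc (fun i => ((xs i : A) : C)) (a : C) :=
  Fin.comp_snoc _ _ _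

lemma BRealizeIn_falsum {A : Set C} {n : ℕ} {v : α → A} {xs : Fin n → A} :
    BRealizeIn A (BoundedFormula.falsum : L.BoundedFormula α n) v xs ↔ False :=
  Iff.rfl

lemma BRealizeIn_imp {A : Set C} {n : ℕ} {f g : L.BoundedFormula α n}
    {v : α → A} {xs : Fin n → A} :
    BRealizeIn A (f.imp g) v xs ↔ (BRealizeIn A f v xs → BRealizeIn A g v xs) :=
  Iff.rfl

lemma BRealizeIn_not {A : Set C} {n : ℕ} {f : L.BoundedFormula α n}
    {v : α → A} {xs : Fin n → A} :
    BRealizeIn A f.not v xs ↔ ¬ BRealizeIn A f v xs :=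
  Iff.rfl

lemma BRealizeIn_all {A : Set C} {n : ℕ} {f : L.BoundedFormula α (n + 1)}
    {v : α → A} {xs : Fin n → A} :
    BRealizeIn A f.all v xs ↔ ∀ a : A, BRealizeIn A f v (Fin.snoc xs a) :=
  Iff.rfl

lemma BRealizeIn_equal {A : Set C} {n : ℕ} {t u : L.Term (α ⊕ Fin n)}
    {v : α → A} {xs : Fin n → A} :
    BRealizeIn A (BoundedFormula.equal t u) v xs ↔
      t.realize (fun i => ((Sum.elim v xs i : A) : C))
        = u.realize (fun i => ((Sum.elim v xs i : A) : C)) := by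
  letI := setStructure L C A
  have h : BRealizeIn A (BoundedFormula.equal t u) v xs ↔
      Term.realize (Sum.elim v xs) t = Term.realize (Sum.elim v xs) u := Iff.rfl
  rw [h, Subtype.ext_iff, term_realize_coe, term_realize_coe]

lemma BRealizeIn_rel {A : Set C} {n k : ℕ} {R : L.Relations k}
    {ts : Fin k → L.Term (α ⊕ Fin n)} {v : α → A} {xs : Fin n → A} :
    BRealizeIn A (BoundedFormula.rel R ts) v xs ↔
      Structure.RelMap R
        (fun i => (ts i).realize (fun j => ((Sum.elim v xs j : A) : C))) := by
  letI := setStructure L C A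
  have h : BRealizeIn A (BoundedFormula.rel R ts) v xs ↔
      Structure.RelMap (M := A) R (fun i => Term.realize (Sum.elim v xs) (ts i)) := Iff.rfl
  rw [h]
  show Structure.RelMap R _ ↔ Structure.RelMap R _
  exact iff_of_eq (congrArg _ (funext fun i => term_realize_coe A (ts i) _))

lemma realize_relQ : ∀ {n : ℕ} (φ : L.BoundedFormula α n) (v : α → ↥(Pset L C P))
    (xs : Fin n → ↥(Pset L C P)),
    (relQ P φ).Realize (fun i => ((v i : ↥(Pset L C P)) : C)) (fun i => ((xs i) : C)) ↔
      BRealizeIn (Pset L C P) φ v xs := by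
  intro n φ
  induction φ with
  | falsum => exact fun v xs => Iff.rfl
  | equal t u =>
    intro v xs
    rw [relQ, BRealizeIn_equal, coe_elim_eq]
    exact Iff.rfl
  | rel R ts =>
    intro v xs
    rw [relQ, BRealizeIn_rel, coe_elim_eq]
    exact Iff.rfl
  | imp f g ihf ihg =>
    intro v xs
    rw [relQ, BoundedFormula.realize_imp, BRealizeIn_imp, ihf, ihg]
  | all f ih =>
    intro v xs
    rw [relQ, BoundedFormula.realize_all, BRealizeIn_all]
    constructor
    · intro h a
      have h2 := h (a : C)
      rw [BoundedFormula.realize_imp, realize_guardBF, Fin.snoc_last] at h2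
      have h3 := h2 a.2
      rw [← ih v (Fin.snoc xs a), coe_snoc_eq]
      exact h3
    · intro h a
      rw [BoundedFormula.realize_imp, realize_guardBF, Fin.snoc_last]
      intro ha
      have h3 := (ih v (Fin.snoc xs ⟨a, ha⟩)).2 (h ⟨a, ha⟩)
      rwa [coe_snoc_eq] at h3

/-- Tarski–Vaught style transfer between two induced substructures. -/
lemma tv2 {B D : Set C} (hBD : B ⊆ D)
    (H : ∀ (n : ℕ) (ψ : L.BoundedFormula α (n + 1)) (v : α → B) (xs : Fin n → B),
      (∃ d : D, BRealizeIn D ψ (fun i => ⟨v i, hBD (v i).2⟩)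
          (Fin.snoc (fun i => ⟨xs i, hBD (xs i).2⟩) d)) →
      ∃ b : B, BRealizeIn D ψ (fun i => ⟨v i, hBD (v i).2⟩)
          (Fin.snoc (fun i => ⟨xs i, hBD (xs i).2⟩) ⟨b, hBD b.2⟩)) :
    ∀ {n : ℕ} (φ : L.BoundedFormula α n) (v : α → B) (xs : Fin n → B),
      BRealizeIn B φ v xs ↔
        BRealizeIn D φ (fun i => ⟨v i, hBD (v i).2⟩) (fun i => ⟨xs i, hBD (xs i).2⟩) := by
  intro n φ
  induction φ with
  | falsum => exact fun v xs => Iff.rfl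
  | equal t u =>
    intro v xs
    rw [BRealizeIn_equal, BRealizeIn_equal]
    have e : (fun i => ((Sum.elim (fun j => (⟨(v j : C), hBD (v j).2⟩ : D))
          (fun j => (⟨(xs j : C), hBD (xs j).2⟩ : D)) i : D) : C))
        = (fun i => ((Sum.elim v xs i : B) : C)) := by
      funext i; cases i <;> rfl
    rw [e]
  | rel R ts =>
    intro v xs
    rw [BRealizeIn_rel, BRealizeIn_rel]
    have e : (fun i => ((Sum.elim (fun j => (⟨(v j : C), hBD (v j).2⟩ : D))
          (fun j => (⟨(xs j : C), hBD (xs j).2⟩ : D)) i : D) : C))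
        = (fun i => ((Sum.elim v xs i : B) : C)) := by
      funext i; cases i <;> rfl
    rw [e]
  | imp f g ihf ihg =>
    intro v xs
    rw [BRealizeIn_imp, BRealizeIn_imp, ihf, ihg]
  | all f ih =>
    intro v xs
    rw [BRealizeIn_all, BRealizeIn_all]
    have key : ∀ b : B, BRealizeIn B f v (Fin.snoc xs b) ↔
        BRealizeIn D f (fun i => ⟨v i, hBD (v i).2⟩)
          (Fin.snoc (fun i => ⟨xs i, hBD (xs i).2⟩) ⟨b, hBD b.2⟩) := by
      intro b
      rw [ih v (Fin.snoc xs b)]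
      have heq : (fun i => (⟨((Fin.snoc xs b : Fin _ → B) i : C),
          hBD ((Fin.snoc xs b : Fin _ → B) i).2⟩ : D)) =
          Fin.snoc (fun i => (⟨(xs i : C), hBD (xs i).2⟩ : D)) ⟨b, hBD b.2⟩ := by
        funext i
        refine Fin.lastCases ?_ (fun j => ?_) i
        · simp only [Fin.snoc_last]
        · simp only [Fin.snoc_castSucc]
      rw [heq]
    constructor
    · intro h d
      by_contra hd
      obtain ⟨b, hb⟩ := H _ f.not v xs ⟨d, BRealizeIn_not.2 hd⟩
      exact (BRealizeIn_not.1 hb) ((key b).1 (h b))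
    · intro h b
      exact (key b).2 (h ⟨b, hBD b.2⟩)

end Aux2


section Aux3

variable {L} {C} {P}

variable {α : Type*}

lemma BRealizeIn_Pset_iff {n : ℕ} (ψ : L.BoundedFormula α n)
    (v : α → ↥(Pset L C P)) (xs : Fin n → ↥(Pset L C P)) (cv : α → C) (cxs : Fin n → C)
    (hv : ∀ i, (v i : C) = cv i) (hxs : ∀ i, (xs i : C) = cxs i) :
    BRealizeIn (Pset L C P) ψ v xs ↔ (relQ P ψ).Realize cv cxs := by
  rw [← realize_relQ, show (fun i => ((v i : ↥(Pset L C P)) : C)) = cv from funext hv,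
    show (fun i => ((xs i : ↥(Pset L C P)) : C)) = cxs from funext hxs]

lemma complete_elemSubset {A : Set C} (hA : IsComplete L C P A) :
    ElemSubset L C (Pset L C P ∩ A) (Pset L C P) := by
  have hBD : Pset L C P ∩ A ⊆ Pset L C P := Set.inter_subset_left
  have H : ∀ (m n : ℕ) (ψ : L.BoundedFormula (Fin m) (n + 1))
      (v : Fin m → ↥(Pset L C P ∩ A)) (xs : Fin n → ↥(Pset L C P ∩ A)),
      (∃ d : ↥(Pset L C P), BRealizeIn (Pset L C P) ψ (fun i => ⟨v i, hBD (v i).2⟩)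
          (Fin.snoc (fun i => ⟨xs i, hBD (xs i).2⟩) d)) →
      ∃ b : ↥(Pset L C P ∩ A), BRealizeIn (Pset L C P) ψ (fun i => ⟨v i, hBD (v i).2⟩)
          (Fin.snoc (fun i => ⟨xs i, hBD (xs i).2⟩) ⟨b, hBD b.2⟩) := by
    intro m n ψ v xs hex
    obtain ⟨d, hd⟩ := hex
    set cv : Fin m → C := fun i => ((v i : C)) with hcv
    set cxs : Fin n → C := fun i => ((xs i : C)) with hcxs
    set g : Fin m ⊕ Fin (n + 1) → Fin 1 ⊕ Fin (m + n) := fun q =>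
      Sum.casesOn q (fun i => Sum.inr (Fin.castAdd n i))
        (fun j => Fin.lastCases (Sum.inl (0 : Fin 1))
          (fun j' => Sum.inr (Fin.natAdd m j')) j) with hg
    set ψC : L.Formula (Fin 1 ⊕ Fin (m + n)) :=
      (((relQ P ψ).toFormula : L.Formula (Fin m ⊕ Fin (n + 1))).relabel g) with hψC
    set bpar : Fin (m + n) → C := fun i => Sum.elim cv cxs (finSumFinEquiv.symm i)
      with hbpar
    have hkey : ∀ z : C,
        ψC.Realize (Sum.elim (fun _ : Fin 1 => z) bpar) ↔
          (relQ P ψ).Realize cv (Fin.snoc cxs z) := by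
      intro z
      rw [hψC, Formula.realize_relabel, BoundedFormula.realize_toFormula]
      have h1 : (Sum.elim (fun _ : Fin 1 => z) bpar ∘ g) ∘ Sum.inl = cv := by
        funext i
        simp only [Function.comp_apply, hg, hbpar, Sum.elim_inr,
          finSumFinEquiv_symm_apply_castAdd, Sum.elim_inl]
      have h2 : (Sum.elim (fun _ : Fin 1 => z) bpar ∘ g) ∘ Sum.inr
          = Fin.snoc cxs z := by
        funext j
        refine Fin.lastCases ?_ (fun j' => ?_) j
        · simp only [Function.comp_apply, hg, Fin.lastCases_last, Sum.elim_inl,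
            Fin.snoc_last]
        · simp only [Function.comp_apply, hg, Fin.lastCases_castSucc, Sum.elim_inr,
            hbpar, finSumFinEquiv_symm_apply_natAdd, Fin.snoc_castSucc]
      rw [h1, h2]
    have hsn : ∀ (d' : ↥(Pset L C P)) (i : Fin (n + 1)),
        (((Fin.snoc (fun i => (⟨(xs i : C), hBD (xs i).2⟩ : ↥(Pset L C P))) d' :
          Fin (n + 1) → ↥(Pset L C P)) i : C))
          = (Fin.snoc cxs (d' : C) : Fin (n + 1) → C) i := by
      intro d' i
      refine Fin.lastCases ?_ (fun j => ?_) i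
      · simp only [Fin.snoc_last]
      · simp only [Fin.snoc_castSucc]; rfl
    have hdreal : (relQ P ψ).Realize cv (Fin.snoc cxs (d : C)) :=
      (BRealizeIn_Pset_iff (C := C) (P := P) ψ _ _ cv (Fin.snoc cxs (d : C))
        (fun i => rfl) (hsn d)).1 hd
    have hbA : ∀ i, bpar i ∈ A := by
      intro i
      rcases h : finSumFinEquiv.symm i with j | j
      · simpa [hbpar, h, hcv] using (v j).2.2
      · simpa [hbpar, h, hcxs] using (xs j).2.2
    obtain ⟨a, haP, haR⟩ := hA 1 (m + n) ψC bpar hbA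
      ⟨fun _ => (d : C), fun _ => d.2, (hkey (d : C)).2 hdreal⟩
    have ha0 : a = fun _ => a 0 := by
      funext i; rw [Subsingleton.elim i 0]
    rw [ha0] at haR
    have hreal := (hkey (a 0)).1 haR
    exact ⟨⟨a 0, haP 0⟩,
      (BRealizeIn_Pset_iff (C := C) (P := P) ψ _ _ cv (Fin.snoc cxs (a 0))
        (fun i => rfl) (hsn ⟨a 0, (haP 0).1⟩)).2 hreal⟩
  refine ⟨hBD, ?_⟩
  intro m φ x
  rw [RealizeIn_def, RealizeIn_def]
  have h2 := tv2 (α := Fin m) hBD (H m) φ x default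
  rw [h2]
  exact iff_of_eq (congrArg _ (Subsingleton.elim _ _))

lemma subset_dclSet {A : Set C} : A ⊆ dclSet L C A := by
  intro b hb
  refine ⟨1, Term.equal (Term.var (Sum.inl 0)) (Term.var (Sum.inr 0)),
    fun _ => ⟨b, hb⟩, ?_, ?_⟩
  · rw [Formula.realize_equal]; rfl
  · intro b' h
    rw [Formula.realize_equal] at h
    exact h

lemma dclSet_subset_aclSet {A : Set C} : dclSet L C A ⊆ aclSet L C A := by
  rintro b ⟨k, φ, a, h1, h2⟩
  exact ⟨k, φ, a, h1, Set.Finite.subset (Set.finite_singleton b)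
    (fun b' hb' => h2 b' hb')⟩

lemma complete_acl_eq {A : Set C} (hA : IsComplete L C P A) :
    aclSet L C A ∩ Pset L C P = Pset L C P ∩ A := by
  apply Set.Subset.antisymm
  · rintro b ⟨⟨k, φ, a, hreal, hfin⟩, hbP⟩
    refine ⟨hbP, ?_⟩
    set ca : Fin k → C := fun i => ((a i : C)) with hca
    set S : Set C :=
      {b' | φ.Realize (Sum.elim (fun _ : Fin 1 => b') ca)} ∩ Pset L C P with hS
    have hSfin : S.Finite := Set.Finite.inter_of_left hfin _
    have hbS : b ∈ S := ⟨hreal, hbP⟩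
    set n := hSfin.toFinset.card with hn
    set e : Fin n ≃ hSfin.toFinset := (hSfin.toFinset.equivFin).symm with he
    set x₀ : Fin n → C := fun i => ((e i : C)) with hx₀
    have hx₀S : ∀ i, x₀ i ∈ S := fun i => hSfin.mem_toFinset.1 (e i).2
    set conjPart : L.Formula (Fin n ⊕ Fin k) :=
      conjF (fun i => φ.relabel (Sum.map (fun _ : Fin 1 => i) (id : Fin k → Fin k)))
      with hconj
    set univInner : L.Formula (Fin 1 ⊕ (Fin n ⊕ Fin k)) :=
      (φ.relabel (Sum.map (id : Fin 1 → Fin 1) (Sum.inr : Fin k → Fin n ⊕ Fin k))).imp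
        (disjF (fun i => Term.equal (Term.var (Sum.inl 0))
          (Term.var (Sum.inr (Sum.inl i))))) with huniv
    set ψ : L.Formula (Fin n ⊕ Fin k) := conjPart ⊓ pAllF P univInner with hψ
    have instreal : ∀ (w : Fin n → C) (i : Fin n),
        ((φ.relabel (Sum.map (fun _ : Fin 1 => i) (id : Fin k → Fin k))).Realize
          (Sum.elim w ca) ↔
          φ.Realize (Sum.elim (fun _ : Fin 1 => w i) ca)) := by
      intro w i
      rw [Formula.realize_relabel]
      refine iff_of_eq (congrArg _ (funext fun q => ?_))
      cases q <;> rfl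
    have innerreal : ∀ (w : Fin n → C) (y : Fin 1 → C),
        (univInner.Realize (Sum.elim y (Sum.elim w ca)) ↔
          (φ.Realize (Sum.elim y ca) → ∃ i, y 0 = w i)) := by
      intro w y
      rw [huniv, Formula.realize_imp, Formula.realize_relabel, realize_disjF]
      have hval : (Sum.elim y (Sum.elim w ca) ∘
          Sum.map (id : Fin 1 → Fin 1) (Sum.inr : Fin k → Fin n ⊕ Fin k))
          = Sum.elim y ca := by
        funext q; cases q <;> rfl
      rw [hval]
      refine imp_congr_right fun _ => ?_
      refine exists_congr fun i => ?_
      rw [Formula.realize_equal]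
      exact Iff.rfl
    have hx₀real : ψ.Realize (Sum.elim x₀ ca) := by
      rw [hψ, Formula.realize_inf, hconj, realize_conjF]
      constructor
      · intro i
        refine (instreal x₀ i).2 ?_
        exact (hx₀S i).1
      · rw [realize_pAllF]
        intro y hy
        refine (innerreal x₀ y).2 (fun hφ => ?_)
        have hval2 : (Sum.elim (fun _ : Fin 1 => y 0) ca) = Sum.elim y ca := by
          funext q
          rcases q with q | q
          · rw [Sum.elim_inl, Sum.elim_inl, Subsingleton.elim (0 : Fin 1) q]
          · rfl
        have hyS : y 0 ∈ S := by
          refine ⟨?_, hy 0⟩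
          show φ.Realize (Sum.elim (fun _ : Fin 1 => y 0) ca)
          rw [hval2]
          exact hφ
        refine ⟨e.symm ⟨y 0, hSfin.mem_toFinset.2 hyS⟩, ?_⟩
        rw [hx₀]
        simp only [Equiv.apply_symm_apply]
    obtain ⟨w, hwPA, hw⟩ := hA n k ψ ca (fun i => (a i).2)
      ⟨x₀, fun i => (hx₀S i).2, hx₀real⟩
    rw [hψ, Formula.realize_inf] at hw
    have hall := (realize_pAllF (P := P) univInner (Sum.elim w ca)).1 hw.2
      (fun _ : Fin 1 => b) (fun _ => hbP)
    have hex := (innerreal w (fun _ => b)).1 hall hreal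
    obtain ⟨i, hi⟩ := hex
    rw [hi]
    exact (hwPA i).2
  · rintro b ⟨hbP, hbA⟩
    exact ⟨dclSet_subset_aclSet (subset_dclSet hbA), hbP⟩

end Aux3


section Aux4

variable {L} {C} {P}

variable {α : Type*}

lemma RealizeIn_relabel {A : Set C} {γ δ : Type*} (g : γ → δ) (φ : L.Formula γ)
    (v : δ → A) :
    RealizeIn L C A (φ.relabel g) v ↔ RealizeIn L C A φ (v ∘ g) := by
  letI := setStructure L C A
  exact Formula.realize_relabel

lemma RealizeIn_exF {A : Set C} {β : Type*} {k : ℕ} (φ : L.Formula (Fin k ⊕ β))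
    (v : β → A) :
    RealizeIn L C A (exF φ) v ↔ ∃ x : Fin k → A, RealizeIn L C A φ (Sum.elim x v) := by
  letI := setStructure L C A
  exact realize_exF φ v

lemma relQ_formula_iff (φ₀ : L.Formula α) (vP : α → ↥(Pset L C P)) (cv : α → C)
    (hv : ∀ i, (vP i : C) = cv i) :
    Formula.Realize (relQ P φ₀ : L.Formula α) cv ↔ RealizeIn L C (Pset L C P) φ₀ vP := by
  rw [RealizeIn_def]
  exact (BRealizeIn_Pset_iff φ₀ vP default cv default hv (fun i => i.elim0)).symm

lemma dcl_eq_of_acl_eq {A : Set C}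
    (h : aclSet L C A ∩ Pset L C P = Pset L C P ∩ A) :
    dclSet L C A ∩ Pset L C P = Pset L C P ∩ A := by
  apply Set.Subset.antisymm
  · intro b hb
    rw [← h]
    exact ⟨dclSet_subset_aclSet hb.1, hb.2⟩
  · rintro b ⟨h1b, h2b⟩
    exact ⟨subset_dclSet h2b, h1b⟩

lemma elem_dcl_complete {A : Set C} (h1 : Hypothesis1 L C P)
    (hEI : EliminatesImaginariesP L C P)
    (hel : ElemSubset L C (Pset L C P ∩ A) (Pset L C P))
    (hdcl : dclSet L C A ∩ Pset L C P = Pset L C P ∩ A) :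
    IsComplete L C P A := by
  obtain ⟨hsub, helem⟩ := hel
  intro k m ψ b hbA hex
  -- Step 1: stable embeddedness gives a definition of ψ(x̄, b̄) over P
  obtain ⟨l, θ, c, hcP, hiffθ⟩ := h1.1 m k (ψ.relabel Sum.swap) b
  have hiff' : ∀ y : Fin k → C, (∀ i, y i ∈ Pset L C P) →
      (ψ.Realize (Sum.elim y b) ↔ θ.Realize (Sum.elim y c)) := by
    intro y hy
    rw [← hiffθ y hy, Formula.realize_relabel]
    refine iff_of_eq (congrArg _ (funext fun q => ?_))
    cases q <;> rfl
  set cP : Fin l → ↥(Pset L C P) := fun i => ⟨c i, hcP i⟩ with hcPdef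
  -- Step 2: transfer the definition into the induced structure on P
  set guards : L.Formula (Fin k ⊕ Fin l) :=
    conjF (fun i : Fin k => Relations.formula₁ P (Term.var (Sum.inl i))) ⊓
      conjF (fun j : Fin l => Relations.formula₁ P (Term.var (Sum.inr j))) with hguards
  set φ₂ : L.Formula (Fin (k + l)) :=
    (θ ⊓ guards).relabel (finSumFinEquiv : Fin k ⊕ Fin l ≃ Fin (k + l)) with hφ₂
  have hφ₂real : ∀ w : Fin k ⊕ Fin l → C,
      (φ₂.Realize (fun i => w (finSumFinEquiv.symm i)) ↔
        (θ.Realize w ∧ (∀ i : Fin k, w (Sum.inl i) ∈ Pset L C P) ∧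
          (∀ j : Fin l, w (Sum.inr j) ∈ Pset L C P))) := by
    intro w
    rw [hφ₂, Formula.realize_relabel]
    have hcomp : ((fun i => w (finSumFinEquiv.symm i)) ∘ finSumFinEquiv) = w := by
      funext q; simp only [Function.comp_apply, Equiv.symm_apply_apply]
    rw [hcomp, Formula.realize_inf, hguards, Formula.realize_inf, realize_conjF,
      realize_conjF]
    refine and_congr_right fun _ => and_congr ?_ ?_ <;>
      refine forall_congr' fun i => ?_ <;>
      rw [Formula.realize_rel₁] <;> exact Iff.rfl
  have hsol : ∀ x : Fin (k + l) → C, φ₂.Realize x → ∀ i, x i ∈ Pset L C P := by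
    intro x hx i
    have hxeq : (fun i => (x ∘ finSumFinEquiv) (finSumFinEquiv.symm i)) = x := by
      funext q; simp only [Function.comp_apply, Equiv.apply_symm_apply]
    have h2 := (hφ₂real (x ∘ finSumFinEquiv)).1 (by rwa [hxeq])
    have hxi : x i = (x ∘ finSumFinEquiv) (finSumFinEquiv.symm i) := by
      simp only [Function.comp_apply, Equiv.apply_symm_apply]
    rw [hxi]
    rcases finSumFinEquiv.symm i with q | q
    · exact h2.2.1 q
    · exact h2.2.2 q
  obtain ⟨θ', hθ'⟩ := h1.2.1 (k + l) φ₂ hsol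
  -- the definable set X of P-tuples
  set X : Set (Fin k → ↥(Pset L C P)) :=
    {x | θ.Realize (Sum.elim (fun i => ((x i : C))) c)} with hX
  have hXdef' : ∀ x : Fin k → ↥(Pset L C P),
      (x ∈ X ↔ RealizeIn L C (Pset L C P)
        (θ'.relabel (⇑finSumFinEquiv.symm : Fin (k + l) → Fin k ⊕ Fin l))
        (Sum.elim x cP)) := by
    intro x
    rw [RealizeIn_relabel]
    have e1 : (Sum.elim x cP ∘ (⇑finSumFinEquiv.symm : Fin (k + l) → Fin k ⊕ Fin l))
        = fun i => Sum.elim x cP (finSumFinEquiv.symm i) := rfl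
    rw [e1, ← hθ' (fun i => Sum.elim x cP (finSumFinEquiv.symm i))]
    have e2 : (fun i => ((Sum.elim x cP (finSumFinEquiv.symm i) : ↥(Pset L C P)) : C))
        = fun i => (fun q => ((Sum.elim x cP q : ↥(Pset L C P)) : C))
            (finSumFinEquiv.symm i) := rfl
    rw [e2, hφ₂real (fun q => ((Sum.elim x cP q : ↥(Pset L C P)) : C))]
    have e3 : θ.Realize (fun q => ((Sum.elim x cP q : ↥(Pset L C P)) : C)) ↔ x ∈ X := by
      rw [hX]
      refine iff_of_eq (congrArg _ (funext fun q => ?_))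
      cases q <;> rfl
    rw [e3]
    constructor
    · intro hx
      exact ⟨hx, fun i => (x i).2, fun j => (cP j).2⟩
    · intro hx
      exact hx.1
  obtain ⟨l₀, φ₀, c₀, hdef, huniq⟩ := hEI k X
    ⟨l, θ'.relabel (⇑finSumFinEquiv.symm : Fin (k + l) → Fin k ⊕ Fin l), cP, hXdef'⟩
  set c₀C : Fin l₀ → C := fun i => ((c₀ i : C)) with hc₀C
  -- key equivalence for P-tuples
  have hkey : ∀ (x : Fin k → C) (hx : ∀ i, x i ∈ Pset L C P)
      (c' : Fin l₀ → C) (hc' : ∀ i, c' i ∈ Pset L C P),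
      (Formula.Realize (relQ P φ₀ : L.Formula (Fin k ⊕ Fin l₀)) (Sum.elim x c') ↔
        RealizeIn L C (Pset L C P) φ₀
          (Sum.elim (fun i => ⟨x i, hx i⟩) (fun i => ⟨c' i, hc' i⟩))) := by
    intro x hx c' hc'
    refine relQ_formula_iff φ₀ _ _ (fun q => ?_)
    cases q <;> rfl
  have hXiff : ∀ (x : Fin k → C) (hx : ∀ i, x i ∈ Pset L C P),
      (ψ.Realize (Sum.elim x b) ↔ (fun i => (⟨x i, hx i⟩ : ↥(Pset L C P))) ∈ X) := by
    intro x hx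
    rw [hiff' x hx, hX]
    refine iff_of_eq (congrArg _ (congrArg _ (funext fun q => ?_)))
    · rfl
  -- Step 4: each coordinate of the code is in dcl(A)
  set gψ : Fin k ⊕ Fin m → Fin k ⊕ (Fin l₀ ⊕ (Fin 1 ⊕ Fin m)) :=
    Sum.map id (fun j => Sum.inr (Sum.inr j)) with hgψ
  set gφ : Fin k ⊕ Fin l₀ → Fin k ⊕ (Fin l₀ ⊕ (Fin 1 ⊕ Fin m)) :=
    Sum.map id (fun j => Sum.inl j) with hgφ
  set inner : L.Formula (Fin k ⊕ (Fin l₀ ⊕ (Fin 1 ⊕ Fin m))) :=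
    (ψ.relabel gψ).iff (Formula.relabel gφ (relQ P φ₀ : L.Formula (Fin k ⊕ Fin l₀))) with hinner
  set mid : L.Formula (Fin l₀ ⊕ (Fin 1 ⊕ Fin m)) := pAllF P inner with hmid
  have hmidreal : ∀ (c' : Fin l₀ → C) (z : C),
      (mid.Realize (Sum.elim c' (Sum.elim (fun _ : Fin 1 => z) b)) ↔
        ∀ x : Fin k → C, (∀ i, x i ∈ Pset L C P) →
          (ψ.Realize (Sum.elim x b) ↔
            Formula.Realize (relQ P φ₀ : L.Formula (Fin k ⊕ Fin l₀)) (Sum.elim x c'))) := by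
    intro c' z
    rw [hmid, realize_pAllF]
    refine forall_congr' fun x => imp_congr_right fun hx => ?_
    rw [hinner, Formula.realize_iff, Formula.realize_relabel, Formula.realize_relabel]
    have e1 : (Sum.elim x (Sum.elim c' (Sum.elim (fun _ : Fin 1 => z) b)) ∘ gψ)
        = Sum.elim x b := by
      funext q; cases q <;> rfl
    have e2 : (Sum.elim x (Sum.elim c' (Sum.elim (fun _ : Fin 1 => z) b)) ∘ gφ)
        = Sum.elim x c' := by
      funext q; cases q <;> rfl
    rw [e1, e2]
  set eqf : Fin l₀ → L.Formula (Fin l₀ ⊕ (Fin 1 ⊕ Fin m)) := fun j =>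
    Term.equal (Term.var (Sum.inr (Sum.inl 0))) (Term.var (Sum.inl j)) with heqf
  set χ : Fin l₀ → L.Formula (Fin 1 ⊕ Fin m) := fun j => pExF P (eqf j ⊓ mid) with hχ
  have hχreal : ∀ (j : Fin l₀) (z : C),
      ((χ j).Realize (Sum.elim (fun _ : Fin 1 => z) b) ↔
        ∃ c' : Fin l₀ → C, (∀ i, c' i ∈ Pset L C P) ∧ z = c' j ∧
          ∀ x : Fin k → C, (∀ i, x i ∈ Pset L C P) →
            (ψ.Realize (Sum.elim x b) ↔
              Formula.Realize (relQ P φ₀ : L.Formula (Fin k ⊕ Fin l₀)) (Sum.elim x c'))) := by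
    intro j z
    rw [hχ, realize_pExF]
    refine exists_congr fun c' => and_congr_right fun hc' => ?_
    rw [Formula.realize_inf, hmidreal c' z, heqf]
    refine and_congr ?_ Iff.rfl
    rw [Formula.realize_equal]
    exact Iff.rfl
  have hc₀dcl : ∀ j : Fin l₀, c₀C j ∈ dclSet L C A := by
    intro j
    refine ⟨m, χ j, fun i => ⟨b i, hbA i⟩, ?_, ?_⟩
    · rw [hχreal j (c₀C j)]
      refine ⟨c₀C, fun i => (c₀ i).2, rfl, fun x hx => ?_⟩
      rw [hXiff x hx, hdef, hkey x hx c₀C (fun i => (c₀ i).2)]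
    · intro z' hz'
      rw [hχreal j z'] at hz'
      obtain ⟨c', hc'P, hz'c, hmidc⟩ := hz'
      have hc'eq : (fun i => (⟨c' i, hc'P i⟩ : ↥(Pset L C P))) = c₀ := by
        apply huniq
        intro x
        rw [← hkey (fun i => ((x i : C))) (fun i => (x i).2) c' hc'P]
        have hx' : (fun i => (⟨((x i : C)), (x i).2⟩ : ↥(Pset L C P))) = x := by
          funext i; exact Subtype.ext rfl
        rw [← hmidc (fun i => ((x i : C))) (fun i => (x i).2),
          hXiff (fun i => ((x i : C))) (fun i => (x i).2), hx']
      have : c' j = c₀C j := by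
        rw [hc₀C, ← hc'eq]
      rw [hz'c, this]
  have hc₀PA : ∀ j, c₀C j ∈ Pset L C P ∩ A := by
    intro j
    rw [← hdcl]
    exact ⟨hc₀dcl j, (c₀ j).2⟩
  set c₀PA : Fin l₀ → ↥(Pset L C P ∩ A) := fun j => ⟨c₀C j, hc₀PA j⟩ with hc₀PAdef
  -- Step 6: use elementarity to find a witness in P ∩ A
  obtain ⟨x, hxP, hxψ⟩ := hex
  have hxX : (fun i => (⟨x i, hxP i⟩ : ↥(Pset L C P))) ∈ X :=
    (hXiff x hxP).1 hxψ
  have hup : RealizeIn L C (Pset L C P) (exF φ₀) c₀ := by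
    rw [RealizeIn_exF]
    exact ⟨fun i => ⟨x i, hxP i⟩, (hdef _).1 hxX⟩
  have hc₀lift : (fun i => (⟨((c₀PA i : C)), hsub (c₀PA i).2⟩ : ↥(Pset L C P))) = c₀ := by
    funext i; exact Subtype.ext rfl
  have hdn : RealizeIn L C (Pset L C P ∩ A) (exF φ₀) c₀PA := by
    rw [helem l₀ (exF φ₀) c₀PA, hc₀lift]
    exact hup
  rw [RealizeIn_exF] at hdn
  obtain ⟨w, hw⟩ := hdn
  -- transfer the witness back up
  set φ₀u : L.Formula (Fin (k + l₀)) :=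
    φ₀.relabel (⇑(finSumFinEquiv : Fin k ⊕ Fin l₀ ≃ Fin (k + l₀))) with hφ₀u
  set uu : Fin (k + l₀) → ↥(Pset L C P ∩ A) :=
    fun i => Sum.elim w c₀PA (finSumFinEquiv.symm i) with huu
  have hdnu : RealizeIn L C (Pset L C P ∩ A) φ₀u uu := by
    rw [hφ₀u, RealizeIn_relabel]
    have : (uu ∘ ⇑(finSumFinEquiv : Fin k ⊕ Fin l₀ ≃ Fin (k + l₀)))
        = Sum.elim w c₀PA := by
      funext q
      simp only [huu, Function.comp_apply, Equiv.symm_apply_apply]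
    rwa [this]
  have hupu := (helem (k + l₀) φ₀u uu).1 hdnu
  rw [hφ₀u, RealizeIn_relabel] at hupu
  have hval : ((fun i => (⟨((uu i : C)), hsub (uu i).2⟩ : ↥(Pset L C P))) ∘
      ⇑(finSumFinEquiv : Fin k ⊕ Fin l₀ ≃ Fin (k + l₀)))
      = Sum.elim (fun i => (⟨((w i : C)), hsub (w i).2⟩ : ↥(Pset L C P))) c₀ := by
    funext q
    apply Subtype.ext
    rcases q with q | q <;>
      simp only [Function.comp_apply, huu, Equiv.symm_apply_apply, Sum.elim_inl,
        Sum.elim_inr] <;> rfl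
  rw [hval] at hupu
  have hwX : (fun i => (⟨((w i : C)), hsub (w i).2⟩ : ↥(Pset L C P))) ∈ X :=
    (hdef _).2 hupu
  have hfin : ψ.Realize (Sum.elim (fun i => ((w i : C))) b) := by
    rw [hXiff (fun i => ((w i : C))) (fun i => (w i).2.1)]
    have : (fun i => (⟨((w i : C)), (w i).2.1⟩ : ↥(Pset L C P)))
        = fun i => (⟨((w i : C)), hsub (w i).2⟩ : ↥(Pset L C P)) := by
      funext i; exact Subtype.ext rfl
    rw [this]
    exact hwX
  exact ⟨fun i => ((w i : C)), fun i => (w i).2, hfin⟩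

end Aux4


/-- Assume `T^P` eliminates imaginaries.  Then `A` is complete iff
`P^A ≺ P^C` and `dcl(A) ∩ P^C = P^A`, iff `P^A ≺ P^C` and `acl(A) ∩ P^C = P^A`.
The implication (i) ⇒ (iii) holds without elimination of imaginaries. -/
theorem completeness_via_dcl_acl
    (h1 : Hypothesis1 L C P) (A : Set C) :
    (EliminatesImaginariesP L C P →
      ((IsComplete L C P A ↔
          (ElemSubset L C (Pset L C P ∩ A) (Pset L C P) ∧
           dclSet L C A ∩ Pset L C P = Pset L C P ∩ A)) ∧
       (IsComplete L C P A ↔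
          (ElemSubset L C (Pset L C P ∩ A) (Pset L C P) ∧
           aclSet L C A ∩ Pset L C P = Pset L C P ∩ A)))) ∧
    (IsComplete L C P A →
      (ElemSubset L C (Pset L C P ∩ A) (Pset L C P) ∧
       aclSet L C A ∩ Pset L C P = Pset L C P ∩ A)) := by
  refine ⟨fun hEI => ⟨⟨fun hc => ⟨complete_elemSubset hc,
      dcl_eq_of_acl_eq (complete_acl_eq hc)⟩,
      fun h => elem_dcl_complete h1 hEI h.1 h.2⟩,
    ⟨fun hc => ⟨complete_elemSubset hc, complete_acl_eq hc⟩,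
      fun h => elem_dcl_complete h1 hEI h.1 (dcl_eq_of_acl_eq h.2)⟩⟩,
    fun hc => ⟨complete_elemSubset hc, complete_acl_eq hc⟩⟩

end OverPredicate
end
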